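/- arXiv:1312.3164 — 4 statements merged into one kernel-verified Lean document; each statement's English description precedes it below -/
import Mathlib

section
/- For all integers m, n with n ≥ 1 and m ≥ n, the determinant D(m+1, n+1, 0, 2) equals the ballot number (m-n+1)/(m+1) · C(m+n, n), where the equality is of rational numbers. -/
/-- Binomial coefficient `C(a,b)` for integers, with the convention that it is `0` when `b < 0`. -/
def ichoose (a b : ℤ) : ℤ := if 0 ≤ b then (a.toNat.choose b.toNat : ℤ) else 0

/-- The determinant `D(m,n,u,k)` of the `(n-1)×(n-1)` matrix with `(i,j)` entry
`C(m - max{u, (k-1)j}, 1 - i + j)` for `i, j = 1, …, n-1`. -/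
def D (m n u k : ℤ) : ℤ :=
  Matrix.det (Matrix.of fun i j : Fin (n - 1).toNat =>
    ichoose (m - max u ((k - 1) * ((j : ℤ) + 1))) (1 - ((i : ℤ) + 1) + ((j : ℤ) + 1)))

/-- matrix entry as a function of naturals -/
def Ent (M i j : ℕ) : ℚ := if i ≤ j+1 then ((M - j).choose (j+1-i) : ℚ) else 0


open Finset in
/-- Alternating Vandermonde: `∑ (-1)^k C(a+k,k) C(b,n-k) = (-1)^n C(a-b+n,n)` for `b ≤ a`. -/
lemma vand (a : ℕ) : ∀ b n : ℕ, b ≤ a →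
    ∑ k ∈ range (n+1), (-1:ℚ)^k * ((a+k).choose k) * (b.choose (n-k))
      = (-1)^n * ((a - b + n).choose n) := by
  intro b
  induction b with
  | zero =>
    intro n _
    rw [Finset.sum_eq_single_of_mem n (Finset.self_mem_range_succ n)]
    · simp
    · intro k hk hkn
      have hk' : k < n := lt_of_le_of_ne (Nat.lt_succ_iff.mp (Finset.mem_range.mp hk)) hkn
      have : (0:ℕ).choose (n - k) = 0 := by
        have : 0 < n - k := Nat.sub_pos_of_lt hk'
        exact Nat.choose_eq_zero_of_lt this
      rw [this]; push_cast; ring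
  | succ b ih =>
    intro n hb
    have hb' : b ≤ a := le_of_lt hb
    cases n with
    | zero => simp
    | succ n =>
      rw [Finset.sum_range_succ]
      have hsplit : ∀ k ∈ range (n+1),
          (-1:ℚ)^k * ((a+k).choose k) * ((b+1).choose (n+1-k))
            = (-1:ℚ)^k * ((a+k).choose k) * (b.choose (n+1-k))
              + (-1:ℚ)^k * ((a+k).choose k) * (b.choose (n-k)) := by
        intro k hk
        have hk' : k ≤ n := Nat.lt_succ_iff.mp (Finset.mem_range.mp hk)
        have h1 : n + 1 - k = (n - k) + 1 := by omega
        rw [h1, Nat.choose_succ_succ]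
        push_cast; ring
      rw [Finset.sum_congr rfl hsplit, Finset.sum_add_distrib]
      have e1 : ∑ k ∈ range (n+1), (-1:ℚ)^k * ((a+k).choose k) * (b.choose (n+1-k))
          = (-1)^(n+1) * ((a - b + (n+1)).choose (n+1))
            - (-1:ℚ)^(n+1) * ((a+(n+1)).choose (n+1)) * (b.choose (n+1-(n+1))) := by
        have := ih (n+1) hb'
        rw [Finset.sum_range_succ] at this
        linarith [this]
      rw [e1, ih n hb']
      have hx : a - (b+1) + (n+1) = a - b + n := by omega
      have hx2 : a - b + (n + 1) = (a - b + n) + 1 := by omega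
      rw [hx, hx2, Nat.choose_succ_succ]
      simp only [Nat.sub_self, Nat.choose_zero_right]
      push_cast; ring




open Finset in
lemma star (M j : ℕ) (hj : j ≤ M) :
    ∑ k ∈ range (j+2), (-1:ℚ)^k * ((M:ℚ)+1-k) * ((M+k).choose k) * ((M-j).choose (j+1-k)) = 0 := by
  have hsplit : ∀ k ∈ range (j+2),
      (-1:ℚ)^k * ((M:ℚ)+1-k) * ((M+k).choose k) * ((M-j).choose (j+1-k))
        = ((M:ℚ)+1) * ((-1:ℚ)^k * ((M+k).choose k) * ((M-j).choose (j+1-k)))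
          - (k:ℚ) * ((-1:ℚ)^k * ((M+k).choose k) * ((M-j).choose (j+1-k))) := by
    intro k _; ring
  rw [Finset.sum_congr rfl hsplit, Finset.sum_sub_distrib, ← Finset.mul_sum]
  have h1 : ∑ k ∈ range (j+2), (-1:ℚ)^k * ((M+k).choose k) * ((M-j).choose (j+1-k))
      = (-1)^(j+1) * ((2*j+1).choose (j+1)) := by
    have := vand M (M-j) (j+1) (Nat.sub_le M j)
    have he : M - (M - j) + (j + 1) = 2*j+1 := by omega
    rw [he] at this
    rw [this]
  have h2 : ∑ k ∈ range (j+2), (k:ℚ) * ((-1:ℚ)^k * ((M+k).choose k) * ((M-j).choose (j+1-k)))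
      = -(((M:ℚ)+1) * ((-1)^j * ((2*j+1).choose j))) := by
    rw [Finset.sum_range_succ']
    simp only [Nat.cast_zero, zero_mul, add_zero, Nat.cast_add, Nat.cast_one]
    have hterm : ∀ k ∈ range (j+1),
        ((k:ℚ)+1) * ((-1:ℚ)^(k+1) * ((M+(k+1)).choose (k+1)) * ((M-j).choose (j+1-(k+1))))
          = -(((M:ℚ)+1) * ((-1:ℚ)^k * (((M+1)+k).choose k) * ((M-j).choose (j-k)))) := by
      intro k _
      have hc : ((M+k+1).choose (k+1)) * (k+1) = ((M+k+1).choose k) * (M+1) := by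
        have := Nat.choose_succ_right_eq (M+k+1) k
        have hsub : M + k + 1 - k = M + 1 := by omega
        rw [hsub] at this
        exact this
      have hs : j + 1 - (k+1) = j - k := by omega
      have hMk : M + (k+1) = M + k + 1 := by omega
      have hMk2 : M + 1 + k = M + k + 1 := by omega
      rw [hs, hMk, hMk2]
      have hcq : ((M+k+1).choose (k+1) : ℚ) * ((k:ℚ)+1) = ((M+k+1).choose k : ℚ) * ((M:ℚ)+1) := by
        exact_mod_cast congrArg (fun x : ℕ => (x:ℚ)) hc
      calc ((k:ℚ)+1) * ((-1:ℚ)^(k+1) * ((M+k+1).choose (k+1)) * ((M-j).choose (j-k)))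
          = (((M+k+1).choose (k+1) : ℚ) * ((k:ℚ)+1)) * ((-1:ℚ)^(k+1) * ((M-j).choose (j-k))) := by ring
        _ = (((M+k+1).choose k : ℚ) * ((M:ℚ)+1)) * ((-1:ℚ)^(k+1) * ((M-j).choose (j-k))) := by rw [hcq]
        _ = -(((M:ℚ)+1) * ((-1:ℚ)^k * ((M+k+1).choose k) * ((M-j).choose (j-k)))) := by
            rw [pow_succ]; ring
    rw [Finset.sum_congr rfl hterm, Finset.sum_neg_distrib, ← Finset.mul_sum]
    have := vand (M+1) (M-j) j (by omega)
    rw [this]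
    have : M + 1 - (M - j) + j = 2*j+1 := by omega
    rw [this]
  rw [h1, h2]
  have hsym : ((2*j+1).choose (j+1)) = ((2*j+1).choose j) := by
    have := Nat.choose_symm (n := 2*j+1) (k := j+1) (by omega)
    have hs : 2*j+1 - (j+1) = j := by omega
    rw [hs] at this
    exact this.symm
  rw [hsym, pow_succ]
  ring





/-- `(m+1)` times the ballot number `b(M,k)`. -/
def bz (M k : ℕ) : ℚ := ((M:ℚ)+1-k) * ((M+k).choose k)

open Finset

lemma core_lt (M i j : ℕ) (hj : j ≤ M) (hji : j < i) :
    ∑ k ∈ range (i+1), (-1:ℚ)^k * bz M k * Ent M k j = 0 := by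
  rw [← Finset.sum_subset (Finset.range_subset_range.mpr (by omega : j+2 ≤ i+1))]
  · rw [← star M j hj]
    refine Finset.sum_congr rfl ?_
    intro k hk
    have hk' : k ≤ j+1 := by have := Finset.mem_range.mp hk; omega
    rw [Ent, if_pos hk', bz]
    ring
  · intro k _ hk2
    have : ¬ (k ≤ j+1) := by have := Finset.mem_range.not.mp hk2; omega
    rw [Ent, if_neg this, mul_zero]

lemma core_eq (M i : ℕ) (hi : i ≤ M) :
    ∑ k ∈ range (i+1), (-1:ℚ)^k * bz M k * Ent M k i = (-1:ℚ)^i * bz M (i+1) := by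
  have hs := star M i hi
  rw [Finset.sum_range_succ] at hs
  have hmain : ∑ k ∈ range (i+1), (-1:ℚ)^k * ((M:ℚ)+1-k) * ((M+k).choose k) * ((M-i).choose (i+1-k))
      = ∑ k ∈ range (i+1), (-1:ℚ)^k * bz M k * Ent M k i := by
    refine Finset.sum_congr rfl ?_
    intro k hk
    have hk' : k ≤ i+1 := by have := Finset.mem_range.mp hk; omega
    rw [Ent, if_pos hk', bz]
    ring
  rw [hmain, Nat.sub_self, Nat.choose_zero_right] at hs
  rw [bz]
  push_cast at hs ⊢
  linear_combination hs

lemma bz_pos (M k : ℕ) (hk : k ≤ M) : 0 < bz M k := by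
  rw [bz]
  have h1 : (0:ℚ) < (M:ℚ)+1-k := by
    have : (k:ℚ) ≤ (M:ℚ) := by exact_mod_cast hk
    linarith
  have h2 : (0:ℚ) < ((M+k).choose k : ℚ) := by
    exact_mod_cast Nat.choose_pos (by omega : k ≤ M+k)
  exact mul_pos h1 h2

/-- The main determinant evaluation over ℚ. -/
lemma detA (M N : ℕ) (h : N ≤ M) :
    (Matrix.of fun i j : Fin N => Ent M (i:ℕ) (j:ℕ)).det
      = ((M:ℚ) - N + 1)/((M:ℚ)+1) * ((M+N).choose N) := by
  have hM1 : ((M:ℚ)+1) ≠ 0 := by positivity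
  set A : Matrix (Fin N) (Fin N) ℚ := Matrix.of (fun i j : Fin N => Ent M (i:ℕ) (j:ℕ)) with hA
  set L : Matrix (Fin N) (Fin N) ℚ := Matrix.of
    (fun i k : Fin N => if (k:ℕ) ≤ (i:ℕ) then (-1:ℚ)^((i:ℕ)-(k:ℕ)) * bz M k else 0) with hL
  have hsign : ∀ i k : ℕ, k ≤ i → (-1:ℚ)^(i-k) = (-1:ℚ)^i * (-1:ℚ)^k := by
    intro i k hk
    have h2 : ((-1:ℚ)^k) * ((-1:ℚ)^k) = 1 := by
      rw [← pow_add, ← two_mul, pow_mul]; norm_num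
    calc (-1:ℚ)^(i-k) = (-1:ℚ)^(i-k) * (((-1:ℚ)^k) * ((-1:ℚ)^k)) := by rw [h2, mul_one]
      _ = ((-1:ℚ)^(i-k) * (-1:ℚ)^k) * (-1:ℚ)^k := by ring
      _ = (-1:ℚ)^i * (-1:ℚ)^k := by rw [← pow_add, Nat.sub_add_cancel hk]
  have hLA : ∀ i j : Fin N, (L * A) i j
      = (-1:ℚ)^(i:ℕ) * ∑ k ∈ range ((i:ℕ)+1), (-1:ℚ)^k * bz M k * Ent M k (j:ℕ) := by
    intro i j
    rw [Matrix.mul_apply]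
    simp only [hL, hA, Matrix.of_apply]
    rw [Fin.sum_univ_eq_sum_range
      (fun k => (if k ≤ (i:ℕ) then (-1:ℚ)^((i:ℕ)-k) * bz M k else 0) * Ent M k (j:ℕ)) N]
    rw [← Finset.sum_subset (Finset.range_subset_range.mpr (by omega : (i:ℕ)+1 ≤ N))]
    · rw [Finset.mul_sum]
      refine Finset.sum_congr rfl ?_
      intro k hk
      have hk' : k ≤ (i:ℕ) := by have := Finset.mem_range.mp hk; omega
      rw [if_pos hk', hsign (i:ℕ) k hk']
      ring
    · intro k _ hk2
      have : ¬ (k ≤ (i:ℕ)) := by have := Finset.mem_range.not.mp hk2; omega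
      rw [if_neg this, zero_mul]
  have hupper : (L * A).BlockTriangular id := by
    intro i j hij
    rw [hLA i j, core_lt M (i:ℕ) (j:ℕ) (by omega) hij, mul_zero]
  have hdiag : ∀ i : Fin N, (L * A) i i = bz M ((i:ℕ)+1) := by
    intro i
    rw [hLA i i, core_eq M (i:ℕ) (by omega)]
    have hsq : ((-1:ℚ)^(i:ℕ)) * ((-1:ℚ)^(i:ℕ)) = 1 := by
      rw [← pow_add, ← two_mul, pow_mul]; norm_num
    calc (-1:ℚ)^(i:ℕ) * ((-1:ℚ)^(i:ℕ) * bz M ((i:ℕ)+1))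
        = ((-1:ℚ)^(i:ℕ) * (-1:ℚ)^(i:ℕ)) * bz M ((i:ℕ)+1) := by ring
      _ = bz M ((i:ℕ)+1) := by rw [hsq, one_mul]
  have hLlower : L.BlockTriangular OrderDual.toDual := by
    intro i j hij
    simp only [hL, Matrix.of_apply]
    rw [if_neg (by exact fun hc => absurd hc (by have h' : (i:ℕ) < (j:ℕ) := hij; omega))]
  have hdetL : L.det = ∏ i : Fin N, bz M (i:ℕ) := by
    rw [Matrix.det_of_lowerTriangular L hLlower]
    refine Finset.prod_congr rfl ?_
    intro i _
    simp only [hL, Matrix.of_apply, le_refl, if_pos, Nat.sub_self, pow_zero, one_mul]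
  have hdetLA : (L * A).det = ∏ i : Fin N, bz M ((i:ℕ)+1) := by
    rw [Matrix.det_of_upperTriangular hupper]
    exact Finset.prod_congr rfl (fun i _ => hdiag i)
  have hkey : (∏ i : Fin N, bz M (i:ℕ)) * A.det = ∏ i : Fin N, bz M ((i:ℕ)+1) := by
    rw [← hdetL, ← Matrix.det_mul, hdetLA]
  -- convert to range products and telescope
  rw [Fin.prod_univ_eq_prod_range (fun i => bz M i) N] at hkey
  rw [Fin.prod_univ_eq_prod_range (fun i => bz M (i+1)) N] at hkey
  have htel : (∏ i ∈ range N, bz M (i+1)) * bz M 0 = (∏ i ∈ range N, bz M i) * bz M N := by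
    rw [← Finset.prod_range_succ' (fun i => bz M i) N, Finset.prod_range_succ]
  have hPne : (∏ i ∈ range N, bz M i) ≠ 0 := by
    refine Finset.prod_ne_zero_iff.mpr ?_
    intro i hi
    exact ne_of_gt (bz_pos M i (by have := Finset.mem_range.mp hi; omega))
  have hbz0 : bz M 0 = (M:ℚ)+1 := by rw [bz]; simp
  have hAdet : A.det * ((M:ℚ)+1) = bz M N := by
    have h1 : ((∏ i ∈ range N, bz M i) * A.det) * bz M 0 = ((∏ i ∈ range N, bz M i) * bz M N) := by
      rw [hkey, htel]
    rw [hbz0] at h1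
    have := mul_left_cancel₀ hPne (by linear_combination h1 :
      (∏ i ∈ range N, bz M i) * (A.det * ((M:ℚ)+1)) = (∏ i ∈ range N, bz M i) * bz M N)
    exact this
  refine mul_right_cancel₀ hM1 ?_
  rw [hAdet, bz]
  rw [div_mul_eq_mul_div, div_mul_eq_mul_div, mul_comm, mul_div_assoc,
    div_self hM1]
  ring







theorem det_eq_ballot (m n : ℤ) (hn : 1 ≤ n) (hm : n ≤ m) :
    (D (m + 1) (n + 1) 0 2 : ℚ) =
      ((m : ℚ) - (n : ℚ) + 1) / ((m : ℚ) + 1) * (ichoose (m + n) n : ℚ) := by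
  have hm0 : ((m.toNat : ℤ)) = m := Int.toNat_of_nonneg (by omega)
  have hn0 : ((n.toNat : ℤ)) = n := Int.toNat_of_nonneg (by omega)
  have hMN : n.toNat ≤ m.toNat := by omega
  have hdim : (n + 1 - 1) = n := by ring
  rw [D, hdim]
  -- identify the integer matrix with the rational one
  have hmat : ∀ i j : Fin n.toNat,
      ((ichoose (m + 1 - max 0 ((2 - 1) * ((j : ℤ) + 1))) (1 - ((i : ℤ) + 1) + ((j : ℤ) + 1)) : ℤ) : ℚ)
        = Ent m.toNat (i:ℕ) (j:ℕ) := by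
    intro i j
    have hmax : max (0:ℤ) ((2 - 1) * ((j : ℤ) + 1)) = (j:ℤ) + 1 := by
      rw [max_eq_right] <;> omega
    rw [hmax]
    have harg1 : m + 1 - ((j:ℤ) + 1) = m - (j:ℤ) := by ring
    have harg2 : 1 - ((i : ℤ) + 1) + ((j : ℤ) + 1) = (j:ℤ) - (i:ℤ) + 1 := by ring
    rw [harg1, harg2, ichoose, Ent]
    by_cases hc : (i:ℕ) ≤ (j:ℕ) + 1
    · rw [if_pos (by omega : (0:ℤ) ≤ (j:ℤ) - (i:ℤ) + 1), if_pos hc]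
      have h1 : (m - (j:ℤ)).toNat = m.toNat - (j:ℕ) := by omega
      have h2 : ((j:ℤ) - (i:ℤ) + 1).toNat = (j:ℕ) + 1 - (i:ℕ) := by omega
      rw [h1, h2]
      push_cast
      ring
    · rw [if_neg (by omega : ¬ (0:ℤ) ≤ (j:ℤ) - (i:ℤ) + 1), if_neg hc]
      simp
  -- cast the determinant
  have hcast : ((Matrix.det (Matrix.of fun i j : Fin n.toNat =>
      ichoose (m + 1 - max 0 ((2 - 1) * ((j : ℤ) + 1))) (1 - ((i : ℤ) + 1) + ((j : ℤ) + 1))) : ℤ) : ℚ)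
      = (Matrix.of fun i j : Fin n.toNat => Ent m.toNat (i:ℕ) (j:ℕ)).det := by
    have h := RingHom.map_det (Int.castRingHom ℚ) (Matrix.of fun i j : Fin n.toNat =>
      ichoose (m + 1 - max 0 ((2 - 1) * ((j : ℤ) + 1))) (1 - ((i : ℤ) + 1) + ((j : ℤ) + 1)))
    simp only [Int.coe_castRingHom] at h
    rw [h]
    congr 1
    ext i j
    simp only [Matrix.map_apply, Matrix.of_apply]
    exact hmat i j
  rw [hcast, detA m.toNat n.toNat hMN]
  -- finish: identify the right-hand sides
  have hrn : ((n.toNat : ℚ)) = (n:ℚ) := by exact_mod_cast congrArg (fun x : ℤ => (x:ℚ)) hn0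
  have hrm : ((m.toNat : ℚ)) = (m:ℚ) := by exact_mod_cast congrArg (fun x : ℤ => (x:ℚ)) hm0
  have hich : (ichoose (m + n) n : ℚ) = ((m.toNat + n.toNat).choose n.toNat : ℚ) := by
    rw [ichoose, if_pos (by omega : (0:ℤ) ≤ n)]
    have h1 : (m + n).toNat = m.toNat + n.toNat := by omega
    rw [h1]
    push_cast
    ring
  rw [hich, hrn, hrm]
end

section
/- For all integers n, k with n ≥ 1 and k ≥ 2, the determinant D((k-1)n+1, n+1, 0, k) equals the Fuss–Catalan number 1/((k-1)n+1) · C(kn, n), where the equality is of rational numbers. -/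
open Finset

def fcB (K j : ℕ) : ℤ := if j = 0 then 0 else ((K * j).choose (j - 1) : ℤ)

def fc (K j : ℕ) : ℤ := ((K * j).choose j : ℤ) - ((K : ℤ) - 1) * fcB K j

lemma fc_zero (K : ℕ) : fc K 0 = 1 := by simp [fc, fcB]

lemma fc_mul (K N : ℕ) (hK : 1 ≤ K) :
    (((K : ℤ) - 1) * N + 1) * fc K N = ((K * N).choose N : ℤ) := by
  obtain ⟨K', rfl⟩ : ∃ K', K = K' + 1 := ⟨K - 1, by omega⟩
  cases N with
  | zero => simp [fc, fcB]
  | succ M =>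
      have hsub : (K' + 1) * (M + 1) - M = K' * (M + 1) + 1 := by
        apply Nat.sub_eq_of_eq_add; ring
      have h := Nat.choose_succ_right_eq ((K' + 1) * (M + 1)) M
      rw [hsub] at h
      have hZ : (((K' + 1) * (M + 1)).choose (M + 1) : ℤ) * ((M : ℤ) + 1)
          = (((K' + 1) * (M + 1)).choose M : ℤ) * ((K' : ℤ) * ((M : ℤ) + 1) + 1) := by
        exact_mod_cast h
      have hcfc : fcB (K' + 1) (M + 1) = (((K' + 1) * (M + 1)).choose M : ℤ) := by
        simp [fcB]
      rw [fc, hcfc]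
      push_cast
      linear_combination (K' : ℤ) * hZ

lemma diff_step (d : ℕ) (f : ℕ → ℤ) :
    ∑ l ∈ range (d + 2), (-1) ^ l * ((d + 1).choose l : ℤ) * f l
      = ∑ l ∈ range (d + 1), (-1) ^ l * (d.choose l : ℤ) * (f l - f (l + 1)) := by
  have h2 : ∑ l ∈ range (d + 1), (-1 : ℤ) ^ l * (d.choose l : ℤ) * f (l + 1)
      = ∑ l ∈ range (d + 2),
          (if l = 0 then 0 else (-1 : ℤ) ^ (l - 1) * (d.choose (l - 1) : ℤ) * f l) := by
    rw [Finset.sum_range_succ'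
      (fun l => if l = 0 then 0 else (-1 : ℤ) ^ (l - 1) * (d.choose (l - 1) : ℤ) * f l) (d + 1)]
    simp
  have h1 : ∑ l ∈ range (d + 1), (-1 : ℤ) ^ l * (d.choose l : ℤ) * f l
      = ∑ l ∈ range (d + 2), (-1 : ℤ) ^ l * (d.choose l : ℤ) * f l := by
    rw [Finset.sum_range_succ (fun l => (-1 : ℤ) ^ l * (d.choose l : ℤ) * f l) (d + 1)]
    simp [Nat.choose_succ_self]
  simp only [mul_sub, Finset.sum_sub_distrib]
  rw [h1, h2, ← Finset.sum_sub_distrib]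
  refine Finset.sum_congr rfl fun l hl => ?_
  rcases Nat.eq_zero_or_pos l with rfl | hp
  · simp
  · obtain ⟨i, rfl⟩ : ∃ i, l = i + 1 := ⟨l - 1, by omega⟩
    simp only [Nat.choose_succ_succ, if_neg (Nat.succ_ne_zero i), Nat.add_sub_cancel]
    push_cast
    ring

lemma Ldiff (K : ℕ) : ∀ d c : ℕ,
    ∑ l ∈ range (d + 1), (-1) ^ l * (d.choose l : ℤ) * ((K * l + c).choose d : ℤ)
      = (-1) ^ d * (K : ℤ) ^ d := by
  intro d
  induction d with
  | zero => intro c; simp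
  | succ d ih =>
      intro c
      rw [show d + 1 + 1 = d + 2 from rfl,
        diff_step d (fun l => ((K * l + c).choose (d + 1) : ℤ))]
      have hdiff : ∀ l : ℕ,
          ((K * l + c).choose (d + 1) : ℤ) - ((K * (l + 1) + c).choose (d + 1) : ℤ)
            = -(∑ s ∈ range K, ((K * l + (c + s)).choose d : ℤ)) := by
        intro l
        have htel := Finset.sum_range_sub (fun s => ((K * l + c + s).choose (d + 1) : ℤ)) K
        have heq : ∑ s ∈ range K, (((K * l + c + (s + 1)).choose (d + 1) : ℤ)
            - ((K * l + c + s).choose (d + 1) : ℤ))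
            = ∑ s ∈ range K, ((K * l + (c + s)).choose d : ℤ) := by
          refine Finset.sum_congr rfl fun s hs => ?_
          have h3 : (K * l + c + (s + 1)).choose (d + 1)
              = (K * l + c + s).choose d + (K * l + c + s).choose (d + 1) :=
            Nat.choose_succ_succ' _ _
          rw [show K * l + (c + s) = K * l + c + s by ring]
          push_cast [h3]; ring
        rw [heq] at htel
        rw [show K * (l + 1) + c = K * l + c + K by ring, htel]
        simp only [Nat.add_zero]
        ring
      calc ∑ l ∈ range (d + 1), (-1 : ℤ) ^ l * (d.choose l : ℤ) *
              (((K * l + c).choose (d + 1) : ℤ) - ((K * (l + 1) + c).choose (d + 1) : ℤ))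
          = ∑ l ∈ range (d + 1), ∑ s ∈ range K,
              -((-1 : ℤ) ^ l * (d.choose l : ℤ) * ((K * l + (c + s)).choose d : ℤ)) := by
            refine Finset.sum_congr rfl fun l hl => ?_
            rw [hdiff l, mul_neg, Finset.mul_sum, ← Finset.sum_neg_distrib]
        _ = -∑ s ∈ range K, ∑ l ∈ range (d + 1),
              (-1 : ℤ) ^ l * (d.choose l : ℤ) * ((K * l + (c + s)).choose d : ℤ) := by
            rw [Finset.sum_comm, ← Finset.sum_neg_distrib]
            exact Finset.sum_congr rfl fun s _ => by rw [← Finset.sum_neg_distrib]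
        _ = -∑ s ∈ range K, (-1 : ℤ) ^ d * (K : ℤ) ^ d := by
            rw [Finset.sum_congr rfl fun s _ => ih (c + s)]
        _ = (-1) ^ (d + 1) * (K : ℤ) ^ (d + 1) := by
            simp only [Finset.sum_const, card_range, nsmul_eq_mul]
            ring

lemma trin (n a b : ℕ) :
    n.choose a * (n - a).choose b = n.choose (a + b) * (a + b).choose a := by
  rcases le_or_gt (a + b) n with h | h
  · have := Nat.choose_mul (n := n) (k := a + b) (s := a) (Nat.le_add_right a b)
    rw [this, Nat.add_sub_cancel_left]
  · have h1 : n.choose (a + b) = 0 := Nat.choose_eq_zero_of_lt h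
    rcases le_or_gt a n with ha | ha
    · have : (n - a).choose b = 0 := Nat.choose_eq_zero_of_lt (by omega)
      rw [this, h1]; ring
    · have : n.choose a = 0 := Nat.choose_eq_zero_of_lt ha
      rw [this, h1]; ring

lemma T1 (K : ℕ) (hK : 1 ≤ K) (i : ℕ) :
    ∑ j ∈ range (i + 1), (-1) ^ j * (((K - 1) * j).choose (i - j) : ℤ) * ((K * j).choose j : ℤ)
      = (-1) ^ i * (K : ℤ) ^ i := by
  rw [← Ldiff K i 0]
  refine Finset.sum_congr rfl fun j hj => ?_
  have hj' : j ≤ i := by have := mem_range.mp hj; omega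
  have hnat : (K * j).choose j * ((K - 1) * j).choose (i - j)
      = (K * j).choose i * i.choose j := by
    have h1 : (K - 1) * j = K * j - j := by rw [Nat.sub_mul, one_mul]
    rw [h1, trin (K * j) j (i - j), Nat.add_sub_cancel' hj']
  have hc := congrArg (fun x : ℕ => (x : ℤ)) hnat
  push_cast at hc
  rw [Nat.add_zero]
  linear_combination ((-1 : ℤ)) ^ j * hc

lemma Wlem (K : ℕ) (hK : 1 ≤ K) (m : ℕ) :
    ∑ j ∈ range (m + 2), (-1) ^ j * (((K - 1) * j + 1).choose (m + 1 - j) : ℤ) * fcB K j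
      = (-1) ^ (m + 1) * (K : ℤ) ^ m := by
  rw [Finset.sum_range_succ'
    (fun j => (-1 : ℤ) ^ j * (((K - 1) * j + 1).choose (m + 1 - j) : ℤ) * fcB K j) (m + 1)]
  have hzero : (-1 : ℤ) ^ 0 * (((K - 1) * 0 + 1).choose (m + 1 - 0) : ℤ) * fcB K 0 = 0 := by
    simp [fcB]
  rw [hzero, add_zero]
  have hterm : ∀ l ∈ range (m + 1),
      (-1 : ℤ) ^ (l + 1) * (((K - 1) * (l + 1) + 1).choose (m + 1 - (l + 1)) : ℤ) * fcB K (l + 1)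
        = -((-1 : ℤ) ^ l * (m.choose l : ℤ) * ((K * l + K).choose m : ℤ)) := by
    intro l hl
    have hl' : l ≤ m := by have := mem_range.mp hl; omega
    have hsub : K * (l + 1) - l = (K - 1) * (l + 1) + 1 := by
      obtain ⟨K', rfl⟩ : ∃ K', K = K' + 1 := ⟨K - 1, by omega⟩
      simp only [Nat.add_sub_cancel]
      apply Nat.sub_eq_of_eq_add; ring
    have hnat : (K * (l + 1)).choose l * ((K - 1) * (l + 1) + 1).choose (m - l)
        = (K * (l + 1)).choose m * m.choose l := by
      rw [← hsub, trin (K * (l + 1)) l (m - l), Nat.add_sub_cancel' hl']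
    have hc := congrArg (fun x : ℕ => (x : ℤ)) hnat
    push_cast at hc
    have hfcb : fcB K (l + 1) = ((K * (l + 1)).choose l : ℤ) := by simp [fcB]
    have hm : m + 1 - (l + 1) = m - l := by omega
    have hKl : K * (l + 1) = K * l + K := by ring
    rw [hm, hfcb, ← hKl]
    calc (-1 : ℤ) ^ (l + 1) * (((K - 1) * (l + 1) + 1).choose (m - l) : ℤ)
          * ((K * (l + 1)).choose l : ℤ)
        = -((-1 : ℤ) ^ l * (((K * (l + 1)).choose l : ℤ)
            * (((K - 1) * (l + 1) + 1).choose (m - l) : ℤ))) := by ring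
      _ = -((-1 : ℤ) ^ l * (m.choose l : ℤ) * ((K * (l + 1)).choose m : ℤ)) := by
          rw [hc]; ring
  rw [Finset.sum_congr rfl hterm, Finset.sum_neg_distrib, Ldiff K m K]
  ring

lemma pascal_split (a : ℕ → ℕ) (i : ℕ) (g : ℕ → ℤ) :
    ∑ j ∈ range (i + 2), (-1) ^ j * ((a j + 1).choose (i + 1 - j) : ℤ) * g j
      = ∑ j ∈ range (i + 2), (-1) ^ j * ((a j).choose (i + 1 - j) : ℤ) * g j
        + ∑ j ∈ range (i + 1), (-1) ^ j * ((a j).choose (i - j) : ℤ) * g j := by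
  have key : ∀ j ∈ range (i + 2),
      (-1 : ℤ) ^ j * ((a j + 1).choose (i + 1 - j) : ℤ) * g j
        = (-1 : ℤ) ^ j * ((a j).choose (i + 1 - j) : ℤ) * g j
          + (if j ≤ i then (-1 : ℤ) ^ j * ((a j).choose (i - j) : ℤ) * g j else 0) := by
    intro j hj
    rcases le_or_gt j i with hji | hji
    · rw [if_pos hji]
      have h1 : i + 1 - j = (i - j) + 1 := by omega
      rw [h1, Nat.choose_succ_succ' (a j) (i - j)]
      push_cast; ring
    · have hj2 : j = i + 1 := by have := mem_range.mp hj; omega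
      subst hj2
      rw [if_neg (by omega)]
      simp
  rw [Finset.sum_congr rfl key, Finset.sum_add_distrib]
  congr 1
  rw [← Finset.sum_subset (Finset.range_subset_range.mpr (by omega : i + 1 ≤ i + 2))
    (fun j _ hj => by rw [if_neg (by simp at hj ⊢; omega)])]
  exact Finset.sum_congr rfl fun j hj => by
    rw [if_pos (by have := mem_range.mp hj; omega)]

lemma Ulem (K : ℕ) (hK : 1 ≤ K) : ∀ i : ℕ,
    ∑ j ∈ range (i + 1), (-1) ^ j * (((K - 1) * j).choose (i - j) : ℤ) * fcB K j
      = (-1) ^ i * ∑ t ∈ range i, (K : ℤ) ^ t := by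
  intro i
  induction i with
  | zero => simp [fcB]
  | succ i ih =>
      have hW := Wlem K hK i
      rw [pascal_split (fun j => (K - 1) * j) i (fcB K), ih] at hW
      rw [show ∑ t ∈ range (i + 1), (K : ℤ) ^ t = (∑ t ∈ range i, (K : ℤ) ^ t) + (K : ℤ) ^ i
        from Finset.sum_range_succ _ i,
        show i + 1 + 1 = i + 2 from rfl]
      linear_combination hW

lemma claim1 (K : ℕ) (hK : 1 ≤ K) (i : ℕ) :
    ∑ j ∈ range (i + 1), (-1) ^ j * (((K - 1) * j).choose (i - j) : ℤ) * fc K j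
      = (-1) ^ i := by
  have hexp : ∑ j ∈ range (i + 1), (-1 : ℤ) ^ j * (((K - 1) * j).choose (i - j) : ℤ) * fc K j
      = (∑ j ∈ range (i + 1),
            (-1 : ℤ) ^ j * (((K - 1) * j).choose (i - j) : ℤ) * ((K * j).choose j : ℤ))
        - ((K : ℤ) - 1) * ∑ j ∈ range (i + 1),
            (-1 : ℤ) ^ j * (((K - 1) * j).choose (i - j) : ℤ) * fcB K j := by
    rw [Finset.mul_sum, ← Finset.sum_sub_distrib]
    refine Finset.sum_congr rfl fun j _ => ?_
    simp only [fc]; ring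
  rw [hexp, T1 K hK i, Ulem K hK i]
  have hgeom := geom_sum_mul ((K : ℤ)) i
  linear_combination (-(-1 : ℤ) ^ i) * hgeom

lemma key (K : ℕ) (hK : 1 ≤ K) (i : ℕ) :
    ∑ j ∈ range (i + 2), (-1) ^ j * (((K - 1) * j + 1).choose (i + 1 - j) : ℤ) * fc K j = 0 := by
  rw [pascal_split (fun j => (K - 1) * j) i (fc K), claim1 K hK (i + 1), claim1 K hK i]
  ring

def Mmat (K N : ℕ) : Matrix (Fin N) (Fin N) ℤ :=
  Matrix.of fun i j => if (i : ℕ) ≤ (j : ℕ) + 1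
    then (((K - 1) * (N - 1 - (j : ℕ)) + 1).choose ((j : ℕ) + 1 - (i : ℕ)) : ℤ) else 0

lemma row_dot (K N : ℕ) (hK : 1 ≤ K) (hN : 1 ≤ N) (i : Fin N) :
    ∑ j : Fin N, ((-1 : ℤ) ^ (N - 1 - (j : ℕ)) * fc K (N - 1 - (j : ℕ))) * Mmat K N i j
      = if (i : ℕ) = 0 then (-1) ^ (N + 1) * fc K N else 0 := by
  have hstep1 : ∑ j : Fin N, ((-1 : ℤ) ^ (N - 1 - (j : ℕ)) * fc K (N - 1 - (j : ℕ)))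
        * Mmat K N i j
      = ∑ j ∈ range N, ((-1 : ℤ) ^ (N - 1 - j) * fc K (N - 1 - j)) *
          (if (i : ℕ) ≤ j + 1
            then (((K - 1) * (N - 1 - j) + 1).choose (j + 1 - (i : ℕ)) : ℤ) else 0) := by
    rw [← Fin.sum_univ_eq_sum_range]
    exact Finset.sum_congr rfl fun j _ => rfl
  rw [hstep1, ← Finset.sum_range_reflect]
  have hstep2 : ∀ j ∈ range N,
      ((-1 : ℤ) ^ (N - 1 - (N - 1 - j)) * fc K (N - 1 - (N - 1 - j))) *
        (if (i : ℕ) ≤ (N - 1 - j) + 1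
          then (((K - 1) * (N - 1 - (N - 1 - j)) + 1).choose ((N - 1 - j) + 1 - (i : ℕ)) : ℤ)
          else 0)
      = (if j ≤ N - (i : ℕ) then
          (-1 : ℤ) ^ j * (((K - 1) * j + 1).choose ((N - (i : ℕ)) - j) : ℤ) * fc K j else 0) := by
    intro j hj
    have hjN : j ≤ N - 1 := by have := mem_range.mp hj; omega
    have hiN : (i : ℕ) ≤ N - 1 := by have := i.isLt; omega
    have h1 : N - 1 - (N - 1 - j) = j := by omega
    have h3 : (N - 1 - j) + 1 - (i : ℕ) = (N - (i : ℕ)) - j := by omega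
    rw [h1, h3]
    rcases le_or_gt j (N - (i : ℕ)) with h | h
    · rw [if_pos (show (i : ℕ) ≤ N - 1 - j + 1 by omega), if_pos h]; ring
    · rw [if_neg (show ¬ (i : ℕ) ≤ N - 1 - j + 1 by omega), if_neg (by omega), mul_zero]
  rw [Finset.sum_congr rfl hstep2]
  rcases Nat.eq_zero_or_pos (i : ℕ) with hi0 | hip
  · rw [if_pos hi0]
    have hall : ∀ j ∈ range N,
        (if j ≤ N - (i : ℕ) then
          (-1 : ℤ) ^ j * (((K - 1) * j + 1).choose ((N - (i : ℕ)) - j) : ℤ) * fc K j else 0)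
        = (-1 : ℤ) ^ j * (((K - 1) * j + 1).choose (N - j) : ℤ) * fc K j := by
      intro j hj
      rw [hi0, Nat.sub_zero, if_pos (by have := mem_range.mp hj; omega)]
    rw [Finset.sum_congr rfl hall]
    have hkey := key K hK (N - 1)
    obtain ⟨N', rfl⟩ : ∃ N', N = N' + 1 := ⟨N - 1, by omega⟩
    simp only [Nat.add_sub_cancel] at hkey
    rw [show N' + 2 = (N' + 1) + 1 from rfl, Finset.sum_range_succ] at hkey
    have hlast : ((-1 : ℤ) ^ (N' + 1) * (((K - 1) * (N' + 1) + 1).choose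
        (N' + 1 - (N' + 1)) : ℤ) * fc K (N' + 1)) = (-1) ^ (N' + 1) * fc K (N' + 1) := by
      simp
    rw [hlast] at hkey
    rw [show N' + 1 + 1 = (N' + 1) + 1 from rfl, pow_succ]
    linear_combination hkey
  · rw [if_neg (by omega)]
    set m := N - (i : ℕ) with hm
    clear_value m
    have hm1 : 1 ≤ m := by have := i.isLt; omega
    have hmN : m + 1 ≤ N := by have := i.isLt; omega
    have hsub : ∑ j ∈ range N,
        (if j ≤ m then
          (-1 : ℤ) ^ j * (((K - 1) * j + 1).choose (m - j) : ℤ) * fc K j else 0)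
        = ∑ j ∈ range (m + 1),
          (-1 : ℤ) ^ j * (((K - 1) * j + 1).choose (m - j) : ℤ) * fc K j := by
      rw [← Finset.sum_subset (Finset.range_subset_range.mpr hmN)
        (fun j _ hj => by rw [if_neg (by simp at hj; omega)])]
      exact Finset.sum_congr rfl fun j hj => by rw [if_pos (by have := mem_range.mp hj; omega)]
    rw [hsub]
    obtain ⟨m', rfl⟩ : ∃ m', m = m' + 1 := ⟨m - 1, by omega⟩
    exact key K hK m'

lemma det_Mmat (K N : ℕ) (hK : 1 ≤ K) (hN : 1 ≤ N) : (Mmat K N).det = fc K N := by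
  obtain ⟨N', rfl⟩ : ∃ N', N = N' + 1 := ⟨N - 1, by omega⟩
  set M := Mmat K (N' + 1) with hM
  set s : Fin (N' + 1) → ℤ :=
    fun j => (-1 : ℤ) ^ (N' + 1 - 1 - (j : ℕ)) * fc K (N' + 1 - 1 - (j : ℕ)) with hs
  have hlin := Matrix.det_updateCol_sum M (Fin.last N') s
  have hs_last : s (Fin.last N') = 1 := by
    simp [hs, Fin.val_last, fc_zero]
  rw [hs_last, one_smul] at hlin
  have hcol : (fun r => ∑ j, s j • M r j)
      = fun r => ((-1 : ℤ) ^ (N' + 1 + 1) * fc K (N' + 1)) •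
          (if r = (0 : Fin (N' + 1)) then (1 : ℤ) else 0) := by
    funext r
    have hrow := row_dot K (N' + 1) hK (by omega) r
    simp only [smul_eq_mul]
    rw [hrow]
    rcases eq_or_ne r 0 with rfl | hr
    · simp
    · rw [if_neg (fun h => hr (Fin.ext (by simpa using h))), if_neg hr]; ring
  rw [hcol] at hlin
  have hsmul : Matrix.updateCol M (Fin.last N')
      (fun r => ((-1 : ℤ) ^ (N' + 1 + 1) * fc K (N' + 1)) •
        (if r = (0 : Fin (N' + 1)) then (1 : ℤ) else 0))
      = Matrix.updateCol M (Fin.last N')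
        (((-1 : ℤ) ^ (N' + 1 + 1) * fc K (N' + 1)) •
          (fun r => if r = (0 : Fin (N' + 1)) then (1 : ℤ) else 0)) := rfl
  rw [hsmul, Matrix.det_updateCol_smul] at hlin
  set A := Matrix.updateCol M (Fin.last N')
      (fun r => if r = (0 : Fin (N' + 1)) then (1 : ℤ) else 0) with hA
  have hsub : ∀ (i j : Fin N'),
      A.submatrix (Fin.succAbove 0) (Fin.last N').succAbove i j
        = M i.succ j.castSucc := by
    intro i j
    rw [Matrix.submatrix_apply, Fin.succAbove_last, Fin.zero_succAbove, hA,
      Matrix.updateCol_ne (Fin.castSucc_lt_last j).ne]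
  have hdet1 : A.det = (-1 : ℤ) ^ N' := by
    rw [Matrix.det_succ_column A (Fin.last N')]
    rw [Finset.sum_eq_single_of_mem (0 : Fin (N' + 1)) (Finset.mem_univ _)
      (fun b _ hb => by
        have hb0 : A b (Fin.last N') = 0 := by
          rw [hA, Matrix.updateCol_self, if_neg hb]
        rw [hb0]; ring)]
    have h00 : A 0 (Fin.last N') = 1 := by
      rw [hA, Matrix.updateCol_self, if_pos rfl]
    rw [h00]
    have htri : (A.submatrix (Fin.succAbove 0) (Fin.last N').succAbove).det = 1 := by
      have hBT : (A.submatrix (Fin.succAbove 0) (Fin.last N').succAbove).BlockTriangular id := by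
        intro i j hij
        rw [hsub i j, hM]
        simp only [Mmat, Matrix.of_apply, Fin.val_succ, Fin.coe_castSucc]
        rw [if_neg (by
          have : (j : ℕ) < (i : ℕ) := hij
          omega)]
      rw [Matrix.det_of_upperTriangular hBT]
      have hdiag : ∀ i : Fin N',
          A.submatrix (Fin.succAbove 0) (Fin.last N').succAbove i i = 1 := by
        intro i
        rw [hsub i i, hM]
        simp only [Mmat, Matrix.of_apply, Fin.val_succ, Fin.coe_castSucc]
        rw [if_pos (by omega)]
        simp
      rw [Finset.prod_congr rfl (fun i _ => hdiag i)]
      simp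
    rw [htri, Fin.val_last]
    simp only [Fin.val_zero, zero_add, mul_one]
  rw [hdet1] at hlin
  rw [← hlin]
  have h2 : (-1 : ℤ) ^ (N' + 1 + 1) * (-1 : ℤ) ^ N' = 1 := by
    rw [← pow_add]
    exact Even.neg_one_pow ⟨N' + 1, by ring⟩
  linear_combination fc K (N' + 1) * h2

theorem det_eq_fussCatalan (n k : ℤ) (hn : 1 ≤ n) (hk : 2 ≤ k) :
    (D ((k - 1) * n + 1) (n + 1) 0 k : ℚ) =
      1 / (((k : ℚ) - 1) * (n : ℚ) + 1) * (ichoose (k * n) n : ℚ) := by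
  have hNn : (((n + 1 - 1).toNat : ℤ)) = n := by omega
  have hKk : ((k.toNat : ℤ)) = k := by omega
  have hK1 : 1 ≤ k.toNat := by omega
  have hN1 : 1 ≤ (n + 1 - 1).toNat := by omega
  have hD : D ((k - 1) * n + 1) (n + 1) 0 k = fc k.toNat (n + 1 - 1).toNat := by
    rw [D]
    have hmat : (Matrix.of fun i j : Fin (n + 1 - 1).toNat =>
        ichoose ((k - 1) * n + 1 - max 0 ((k - 1) * ((j : ℤ) + 1)))
          (1 - ((i : ℤ) + 1) + ((j : ℤ) + 1))) = Mmat k.toNat (n + 1 - 1).toNat := by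
      ext i j
      have hjN : ((j : ℕ) : ℤ) ≤ n - 1 := by
        have := j.isLt; omega
      simp only [Matrix.of_apply, Mmat, ichoose]
      have hmax : max (0 : ℤ) ((k - 1) * ((j : ℤ) + 1)) = (k - 1) * ((j : ℤ) + 1) :=
        max_eq_right (mul_nonneg (by omega) (by positivity))
      rw [hmax]
      by_cases hcond : (i : ℕ) ≤ (j : ℕ) + 1
      · rw [if_pos (by push_cast; omega), if_pos hcond]
        have htop : (k - 1) * n + 1 - (k - 1) * ((j : ℤ) + 1)
            = (((k.toNat - 1) * ((n + 1 - 1).toNat - 1 - (j : ℕ)) + 1 : ℕ) : ℤ) := by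
          have e1 : ((k.toNat - 1 : ℕ) : ℤ) = k - 1 := by omega
          have e2 : (((n + 1 - 1).toNat - 1 - (j : ℕ) : ℕ) : ℤ) = n - 1 - (j : ℕ) := by omega
          push_cast [e1]
          push_cast at e2
          rw [e2]
          ring
        rw [htop, Int.toNat_natCast,
          show (1 - ((i : ℤ) + 1) + ((j : ℤ) + 1)).toNat = (j : ℕ) + 1 - (i : ℕ) by omega]
      · rw [if_neg (by push_cast; omega), if_neg hcond]
    rw [hmat, det_Mmat _ _ hK1 hN1]
  have hich : ichoose (k * n) n = ((k.toNat * (n + 1 - 1).toNat).choose (n + 1 - 1).toNat : ℤ) := by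
    rw [ichoose, if_pos (by omega)]
    have : k * n = ((k.toNat * (n + 1 - 1).toNat : ℕ) : ℤ) := by push_cast [hKk, hNn]; ring
    rw [this, Int.toNat_natCast, show n.toNat = (n + 1 - 1).toNat by omega]
  rw [hD, hich]
  have hfm := fc_mul k.toNat (n + 1 - 1).toNat hK1
  have hKq : ((k.toNat : ℚ)) = (k : ℚ) := by exact_mod_cast congrArg ((Int.cast : ℤ → ℚ)) hKk
  have hNq : (((n + 1 - 1).toNat : ℚ)) = (n : ℚ) := by exact_mod_cast congrArg ((Int.cast : ℤ → ℚ)) hNn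
  have hQ : (((k : ℚ) - 1) * (n : ℚ) + 1) * ((fc k.toNat (n + 1 - 1).toNat : ℤ) : ℚ)
      = (((k.toNat * (n + 1 - 1).toNat).choose (n + 1 - 1).toNat : ℕ) : ℚ) := by
    have := congrArg ((Int.cast : ℤ → ℚ)) hfm
    push_cast at this ⊢
    rw [hKq, hNq] at this
    exact_mod_cast this
  have hne : ((k : ℚ) - 1) * (n : ℚ) + 1 ≠ 0 := by
    have h1 : (1 : ℚ) ≤ (k : ℚ) - 1 := by
      have : (2 : ℚ) ≤ (k : ℚ) := by exact_mod_cast hk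
      linarith
    have h2 : (1 : ℚ) ≤ (n : ℚ) := by exact_mod_cast hn
    nlinarith
  rw [one_div, inv_mul_eq_div, eq_div_iff hne]
  push_cast
  linear_combination hQ
end

section
/- For all integers n ≥ 1, the determinant D(n+1, n+1, 0, 2) equals the Catalan number 1/(n+1) · C(2n, n), where the equality is of rational numbers. -/
namespace Cat

/-- `(m+1)` times the ballot number `B(m,k)`. -/
def Bt (m k : ℕ) : ℚ := ((m : ℚ) + 1 - k) * ((m + k).choose k : ℕ)

lemma Bt_pos (m k : ℕ) (h : k ≤ m) : 0 < Bt m k := by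
  have h1 : (0:ℚ) < (m : ℚ) + 1 - k := by
    have : (k:ℚ) ≤ m := by exact_mod_cast h
    linarith
  have h2 : (0:ℚ) < (((m + k).choose k : ℕ) : ℚ) := by
    exact_mod_cast Nat.choose_pos (Nat.le_add_left k m)
  exact mul_pos h1 h2

lemma Bt_ne_zero (m k : ℕ) (h : k ≤ m) : Bt m k ≠ 0 := ne_of_gt (Bt_pos m k h)

lemma choose_mul_rat (a p : ℕ) (hp : 1 ≤ p) :
    (a.choose p : ℚ) * p = (a.choose (p-1) : ℚ) * ((a:ℚ) - ((p:ℚ)-1)) := by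
  rcases le_or_gt p (a+1) with h | h
  · have h1 : p - 1 ≤ a := by omega
    have h0 := Nat.choose_succ_right_eq a (p-1)
    have hps : p - 1 + 1 = p := by omega
    rw [hps] at h0
    have h2 := congrArg (fun x : ℕ => (x : ℚ)) h0
    push_cast [Nat.cast_sub h1, Nat.cast_sub hp] at h2
    linarith [h2]
  · have h1 : a.choose p = 0 := Nat.choose_eq_zero_of_lt (by omega)
    have h2 : a.choose (p-1) = 0 := Nat.choose_eq_zero_of_lt (by omega)
    simp [h1, h2]

lemma psum (m j : ℕ) (hj : j < m) :
    ∀ K, K ≤ j →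
    (∑ k ∈ Finset.range (K+1), (-1:ℚ)^k * Bt m k * ((m-j).choose (j+1-k) : ℕ)) * ((j:ℚ)+1) =
      (-1:ℚ)^K * (((K:ℚ)+m-2*j)*((K:ℚ)+m+1)) *
        ((m+K).choose K : ℕ) * ((m-j).choose (j-K) : ℕ) := by
  intro K
  induction K with
  | zero =>
    intro _
    have hrel := choose_mul_rat (m-j) (j+1) (by omega)
    have hc : ((m - j : ℕ) : ℚ) = (m:ℚ) - j := by
      push_cast [Nat.cast_sub (le_of_lt hj)]; ring
    simp only [Nat.add_sub_cancel] at hrel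
    rw [hc] at hrel
    push_cast at hrel
    rw [Finset.sum_range_one]
    have hBt0 : Bt m 0 = (m:ℚ) + 1 := by simp [Bt]
    rw [hBt0]
    simp only [pow_zero, one_mul, Nat.sub_zero, Nat.add_zero, Nat.choose_zero_right,
      Nat.cast_one, Nat.cast_zero, mul_one]
    push_cast
    linear_combination ((m:ℚ)+1) * hrel
  | succ K ih =>
    intro hK1
    have hK : K ≤ j := by omega
    have hIH := ih hK
    rw [Finset.sum_range_succ]
    have r1 : ((m+K+1).choose (K+1) : ℚ) * ((K:ℚ)+1) = ((m+K).choose K : ℚ) * ((m:ℚ)+K+1) := by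
      have h0 := Nat.add_one_mul_choose_eq (m+K) K
      have h2 := congrArg (fun x : ℕ => (x : ℚ)) h0
      push_cast at h2
      linear_combination -h2
    have r2 : ((m-j).choose (j-K) : ℚ) * ((j:ℚ)-K) =
        ((m-j).choose (j-K-1) : ℚ) * ((m:ℚ)-2*j+K+1) := by
      have hrel := choose_mul_rat (m-j) (j-K) (by omega)
      have hc1 : ((j - K : ℕ) : ℚ) = (j:ℚ) - K := by push_cast [Nat.cast_sub hK]; ring
      have hc2 : ((m - j : ℕ) : ℚ) = (m:ℚ) - j := by
        push_cast [Nat.cast_sub (le_of_lt hj)]; ring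
      rw [hc1, hc2] at hrel
      linear_combination hrel
    have e1 : j + 1 - (K+1) = j - K := by omega
    have e2 : j - (K+1) = j - K - 1 := by omega
    have e3 : m + (K+1) = m + K + 1 := by omega
    rw [e1, e2, e3]
    have hBt : Bt m (K+1) = ((m:ℚ) - K) * (((m+K+1).choose (K+1) : ℕ) : ℚ) := by
      unfold Bt
      rw [e3]
      push_cast
      ring
    rw [hBt]
    push_cast
    linear_combination hIH - (-1:ℚ)^K * (((K:ℚ)+m-2*j) * ((m-j).choose (j-K) : ℕ)) * r1
      - (-1:ℚ)^K * (((K:ℚ)+m+2) * ((m+K+1).choose (K+1) : ℕ)) * r2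

lemma key (m j : ℕ) (hj : j < m) :
    ∑ k ∈ Finset.range (j+2), (-1:ℚ)^k * Bt m k * ((m-j).choose (j+1-k) : ℕ) = 0 := by
  have h := psum m j hj j le_rfl
  have r1 : ((m+j+1).choose (j+1) : ℚ) * ((j:ℚ)+1) = ((m+j).choose j : ℚ) * ((m:ℚ)+j+1) := by
    have h0 := Nat.add_one_mul_choose_eq (m+j) j
    have h2 := congrArg (fun x : ℕ => (x : ℚ)) h0
    push_cast at h2
    linear_combination -h2
  have hj1 : ((j:ℚ) + 1) ≠ 0 := by positivity
  have h2 : (∑ k ∈ Finset.range (j+2), (-1:ℚ)^k * Bt m k * ((m-j).choose (j+1-k) : ℕ))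
      * ((j:ℚ)+1) = 0 := by
    rw [Finset.sum_range_succ, add_mul, h]
    have e1 : j + 1 - (j+1) = 0 := by omega
    have e2 : j - j = 0 := by omega
    rw [e1, e2]
    have hBt : Bt m (j+1) = ((m:ℚ) - j) * (((m+j+1).choose (j+1) : ℕ) : ℚ) := by
      unfold Bt
      have e3 : m + (j+1) = m + j + 1 := by omega
      rw [e3]
      push_cast
      ring
    rw [hBt]
    simp only [Nat.choose_zero_right, Nat.cast_one, mul_one]
    push_cast
    linear_combination (-1:ℚ)^(j+1) * ((m:ℚ)-j) * r1
  exact (mul_eq_zero.mp h2).resolve_right hj1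

end Cat

namespace Cat

/-- entry of the ballot matrix -/
def aent (N i j : ℕ) : ℚ := if i ≤ j + 1 then ((N - j).choose (j+1-i) : ℕ) else 0

/-- entry of the triangularizing matrix -/
def ment (N i k : ℕ) : ℚ := if k ≤ i then (-1:ℚ)^(i-k) * Bt N k / Bt N i else 0

lemma negpow (a b : ℕ) (h : b ≤ a) : (-1:ℚ)^(a-b) = (-1)^a * (-1)^b := by
  have e : a + b = (a - b) + 2*b := by omega
  have : (-1:ℚ)^a * (-1)^b = (-1)^(a+b) := by rw [pow_add]
  rw [this, e, pow_add, pow_mul]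
  norm_num

lemma row_sum (N : ℕ) (i j : ℕ) (hi : i < N) (hj : j < N) (hij : j ≤ i) :
    ∑ c ∈ Finset.range N, ment N i c * aent N c j =
      (-1:ℚ)^i / Bt N i *
        ∑ k ∈ Finset.range (min (i+1) (j+2)), (-1:ℚ)^k * Bt N k * ((N-j).choose (j+1-k) : ℕ) := by
  rw [Finset.mul_sum]
  rw [← Finset.sum_subset (Finset.range_subset_range.mpr (by omega : min (i+1) (j+2) ≤ N))]
  · apply Finset.sum_congr rfl
    intro c hc
    simp only [Finset.mem_range, lt_min_iff] at hc
    unfold ment aent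
    rw [if_pos (by omega : c ≤ i), if_pos (by omega : c ≤ j + 1)]
    rw [negpow i c (by omega)]
    field_simp
  · intro c hc hnc
    simp only [Finset.mem_range, lt_min_iff, not_and, not_lt] at hc hnc
    unfold ment aent
    rcases le_or_gt (i+1) (j+2) with h | h
    · rw [if_neg (by omega : ¬ c ≤ i)]
      simp
    · rw [if_neg (by omega : ¬ c ≤ j + 1)]
      simp

lemma offdiag (N : ℕ) (i j : ℕ) (hi : i < N) (hj : j < i) :
    ∑ c ∈ Finset.range N, ment N i c * aent N c j = 0 := by
  rw [row_sum N i j hi (by omega) (by omega)]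
  have hmin : min (i+1) (j+2) = j + 2 := by omega
  rw [hmin, key N j (by omega)]
  ring

lemma diag (N : ℕ) (i : ℕ) (hi : i < N) :
    ∑ c ∈ Finset.range N, ment N i c * aent N c i = Bt N (i+1) / Bt N i := by
  rw [row_sum N i i hi hi le_rfl]
  have hmin : min (i+1) (i+2) = i + 1 := by omega
  rw [hmin]
  have hkey := key N i hi
  rw [Finset.sum_range_succ] at hkey
  have e1 : i + 1 - (i+1) = 0 := by omega
  rw [e1] at hkey
  have hs : ∑ k ∈ Finset.range (i+1), (-1:ℚ)^k * Bt N k * ((N-i).choose (i+1-k) : ℕ)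
      = (-1:ℚ)^i * Bt N (i+1) := by
    have := hkey
    simp only [Nat.choose_zero_right, Nat.cast_one, mul_one] at this
    have hp : (-1:ℚ)^(i+1) = -(-1:ℚ)^i := by rw [pow_succ]; ring
    rw [hp] at this
    linarith
  rw [hs]
  have hBne : Bt N i ≠ 0 := Bt_ne_zero N i (by omega)
  field_simp
  ring_nf
  have h2 : (-1:ℚ)^(i*2) = 1 := by
    rw [show i*2 = 2*i by omega, pow_mul]; norm_num
  rw [h2]
  ring

lemma teleprod (f : ℕ → ℚ) : ∀ K, (∀ c, c ≤ K → f c ≠ 0) →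
    ∏ c ∈ Finset.range K, f (c+1) / f c = f K / f 0 := by
  intro K
  induction K with
  | zero => intro h; simp [div_self (h 0 le_rfl)]
  | succ K ih =>
    intro h
    rw [Finset.prod_range_succ, ih (fun c hc => h c (by omega))]
    have h0 : f 0 ≠ 0 := h 0 (by omega)
    have hK : f K ≠ 0 := h K (by omega)
    field_simp

lemma det_Aq (N : ℕ) :
    Matrix.det (Matrix.of fun i j : Fin N => aent N i j) = ((2*N).choose N : ℚ) / ((N:ℚ)+1) := by
  set A : Matrix (Fin N) (Fin N) ℚ := Matrix.of fun i j => aent N (i:ℕ) (j:ℕ) with hA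
  set M : Matrix (Fin N) (Fin N) ℚ := Matrix.of fun i k => ment N (i:ℕ) (k:ℕ) with hM
  have hMA : ∀ i j : Fin N, (M * A) i j = ∑ c ∈ Finset.range N, ment N i c * aent N c j := by
    intro i j
    rw [Matrix.mul_apply]
    simp only [hM, hA, Matrix.of_apply]
    exact Fin.sum_univ_eq_sum_range (fun c => ment N (i:ℕ) c * aent N c (j:ℕ)) N
  have hMdet : M.det = 1 := by
    have htri : M.BlockTriangular OrderDual.toDual := by
      intro i j hij
      simp only [hM, Matrix.of_apply, ment]
      rw [if_neg (by exact fun h => absurd h (by simpa using hij))]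
    rw [Matrix.det_of_lowerTriangular M htri]
    apply Finset.prod_eq_one
    intro i _
    simp only [hM, Matrix.of_apply, ment, if_pos le_rfl, Nat.sub_self, pow_zero, one_mul]
    exact div_self (Bt_ne_zero N i (by omega))
  have htriMA : (M * A).BlockTriangular id := by
    intro i j hij
    rw [hMA i j]
    exact offdiag N i j i.isLt (by exact_mod_cast hij)
  have hdet2 : (M * A).det = ∏ i : Fin N, Bt N ((i:ℕ)+1) / Bt N (i:ℕ) := by
    rw [Matrix.det_of_upperTriangular htriMA]
    apply Finset.prod_congr rfl
    intro i _
    rw [hMA i i, diag N i i.isLt]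
  have hprod : ∏ i : Fin N, Bt N ((i:ℕ)+1) / Bt N (i:ℕ) = Bt N N / Bt N 0 := by
    rw [Fin.prod_univ_eq_prod_range (fun c => Bt N (c+1) / Bt N c) N]
    exact teleprod (Bt N) N (fun c hc => Bt_ne_zero N c hc)
  have hdet3 : (M * A).det = M.det * A.det := Matrix.det_mul M A
  have hBN : Bt N N = ((2*N).choose N : ℚ) := by
    unfold Bt
    rw [show N + N = 2*N by omega]
    push_cast
    ring
  have hB0 : Bt N 0 = (N:ℚ) + 1 := by simp [Bt]
  have : A.det = Bt N N / Bt N 0 := by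
    rw [← hprod, ← hdet2, hdet3, hMdet, one_mul]
  rw [hA] at this
  rw [this, hBN, hB0]

end Cat

namespace Cat

lemma ichoose_entry (N i j : ℕ) (hj : j < N) :
    ((ichoose ((N:ℤ) - j) ((j:ℤ) - i + 1) : ℤ) : ℚ) = aent N i j := by
  unfold ichoose aent
  rcases le_or_gt i (j+1) with h | h
  · rw [if_pos (by omega : (0:ℤ) ≤ (j:ℤ) - i + 1), if_pos h]
    have hcast : ((j:ℤ) - i + 1) = ((j + 1 - i : ℕ) : ℤ) := by
      push_cast [Nat.cast_sub h]
      ring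
    rw [show (((N:ℤ) - j).toNat) = N - j by omega, hcast, Int.toNat_natCast]
    push_cast
    ring
  · rw [if_neg (by omega : ¬ (0:ℤ) ≤ (j:ℤ) - i + 1), if_neg (by omega : ¬ i ≤ j + 1)]
    norm_num

lemma D_eval (N : ℕ) :
    ((D ((N:ℤ)+1) ((N:ℤ)+1) 0 2 : ℤ) : ℚ) =
      Matrix.det (Matrix.of fun i j : Fin N => aent N i j) := by
  unfold D
  have e : (((N:ℤ)+1) - 1).toNat = N := by omega
  rw [show ((Matrix.det (Matrix.of fun i j : Fin ((((N:ℤ)+1) - 1).toNat) =>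
      ichoose (((N:ℤ)+1) - max 0 ((2 - 1) * ((j : ℤ) + 1)))
        (1 - ((i : ℤ) + 1) + ((j : ℤ) + 1))) : ℤ) : ℚ)
    = ((Matrix.of fun i j : Fin ((((N:ℤ)+1) - 1).toNat) =>
      ichoose (((N:ℤ)+1) - max 0 ((2 - 1) * ((j : ℤ) + 1)))
        (1 - ((i : ℤ) + 1) + ((j : ℤ) + 1))).map (Int.cast : ℤ → ℚ)).det from
    RingHom.map_det (Int.castRingHom ℚ) _]
  rw [← Matrix.det_reindex_self (finCongr e) ((Matrix.of fun i j : Fin ((((N:ℤ)+1) - 1).toNat) =>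
      ichoose (((N:ℤ)+1) - max 0 ((2 - 1) * ((j : ℤ) + 1)))
        (1 - ((i : ℤ) + 1) + ((j : ℤ) + 1))).map (Int.cast : ℤ → ℚ))]
  congr 1
  ext i j
  simp only [Matrix.reindex_apply, Matrix.submatrix_apply, Matrix.map_apply, Matrix.of_apply,
    finCongr_symm, finCongr_apply, Fin.coe_cast]
  have h1 : ((N:ℤ)+1) - max 0 ((2 - 1) * ((j:ℤ) + 1)) = (N:ℤ) - j := by
    rw [max_eq_right (by positivity)]
    ring
  have h2 : 1 - ((i:ℤ) + 1) + ((j:ℤ) + 1) = (j:ℤ) - i + 1 := by ring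
  rw [h1, h2, ichoose_entry N i j j.isLt]

end Cat

theorem det_eq_catalan (n : ℤ) (hn : 1 ≤ n) :
    (D (n + 1) (n + 1) 0 2 : ℚ) = 1 / ((n : ℚ) + 1) * (ichoose (2 * n) n : ℚ) := by
  lift n to ℕ using (by omega : 0 ≤ n) with N
  rw [Cat.D_eval N, Cat.det_Aq N]
  have h2 : (ichoose (2*(N:ℤ)) (N:ℤ) : ℚ) = ((2*N).choose N : ℚ) := by
    unfold ichoose
    rw [if_pos (by positivity)]
    rw [show ((2*(N:ℤ)).toNat) = 2*N by omega, show (((N:ℤ)).toNat) = N by omega]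
    push_cast
    ring
  rw [h2]
  push_cast
  ring
end

section
/- For all integers n ≥ 1, the determinant D(2n+1, n+1, 0, 3) equals 1/(2n+1) · C(3n, n), where the equality is of rational numbers. -/
lemma ichoose_neg {a b : ℤ} (h : b < 0) : ichoose a b = 0 := by
  simp [ichoose, not_le.mpr h]

lemma ichoose_natCast (a b : ℕ) : ichoose a b = a.choose b := by
  simp [ichoose]

lemma ichoose_zero (a : ℤ) : ichoose a 0 = 1 := by simp [ichoose]

lemma ichoose_one {a : ℤ} (h : 0 ≤ a) : ichoose a 1 = a := by
  simp [ichoose, Nat.choose_one_right, Int.toNat_of_nonneg h]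

lemma ichoose_eq_zero_of_lt {a b : ℤ} (ha : 0 ≤ a) (h : a < b) : ichoose a b = 0 := by
  simp only [ichoose, if_pos (le_of_lt (lt_of_le_of_lt ha h))]
  norm_cast
  exact Nat.choose_eq_zero_of_lt (by omega)

-- absorption: (a - s) * C(a, s) = a * C(a-1, s), for a ≥ 1, s ≥ 0

lemma ichoose_absorb {a s : ℤ} (ha : 1 ≤ a) (hs : 0 ≤ s) :
    (a - s) * ichoose a s = a * ichoose (a - 1) s := by
  rcases le_or_gt s (a - 1) with h | h
  · lift a to ℕ using (by omega : (0:ℤ) ≤ a)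
    lift s to ℕ using hs
    rw [show (a : ℤ) - 1 = ((a - 1 : ℕ) : ℤ) by omega, ichoose_natCast, ichoose_natCast,
      show (a : ℤ) - s = ((a - s : ℕ) : ℤ) by omega]
    have := Nat.choose_mul_succ_eq (a - 1) s
    rw [show a - 1 + 1 = a by omega] at this
    push_cast
    nlinarith [this]
  · have e1 : ichoose (a - 1) s = 0 := ichoose_eq_zero_of_lt (by omega) (by omega)
    rw [e1, mul_zero]
    rcases eq_or_lt_of_le (show a ≤ s by omega) with h2 | h2
    · rw [← h2, sub_self, zero_mul]
    · rw [ichoose_eq_zero_of_lt (by omega) h2, mul_zero]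

-- (s+1) C(a, s+1) = (a - s) C(a, s), for a ≥ 0, s ≥ 0

lemma ichoose_succ {a s : ℤ} (ha : 0 ≤ a) (hs : 0 ≤ s) :
    (s + 1) * ichoose a (s + 1) = (a - s) * ichoose a s := by
  rcases le_or_gt (s + 1) a with h | h
  · lift a to ℕ using ha
    lift s to ℕ using hs
    rw [show (s : ℤ) + 1 = ((s + 1 : ℕ) : ℤ) by push_cast; ring, ichoose_natCast,
      ichoose_natCast, show (a : ℤ) - s = ((a - s : ℕ) : ℤ) by omega]
    have := Nat.choose_succ_right_eq a s
    push_cast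
    nlinarith [this]
  · have e1 : ichoose a (s + 1) = 0 := ichoose_eq_zero_of_lt ha (by omega)
    rw [e1, mul_zero]
    rcases eq_or_lt_of_le (show a ≤ s by omega) with h2 | h2
    · rw [← h2, sub_self, zero_mul]
    · rw [ichoose_eq_zero_of_lt ha h2, mul_zero]

def Gmat (N : ℕ) (s : ℤ) : Matrix (Fin N) (Fin N) ℤ :=
  Matrix.of fun i j =>
    ichoose (2 * (N : ℤ) - 1 - 2 * (j : ℤ))
      (if (i : ℕ) = 0 then (j : ℤ) + s else (j : ℤ) - (i : ℤ) + 1)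

def Fdet (N : ℕ) (s : ℤ) : ℤ := (Gmat N s).det

lemma Fdet_one (s : ℤ) : Fdet 1 s = ichoose 1 s := by
  rw [Fdet, Matrix.det_fin_one]
  norm_num [Gmat]

lemma sub1 (K : ℕ) (s : ℤ) :
    (Gmat (K + 2) s).submatrix (Fin.succAbove 0) Fin.succ = Gmat (K + 1) 1 := by
  ext i j
  simp only [Matrix.submatrix_apply, Gmat, Matrix.of_apply, Fin.succAbove_zero, Fin.val_succ]
  push_cast
  rcases Nat.eq_zero_or_pos (i : ℕ) with h | h
  · have h' : ((i : ℕ) : ℤ) = 0 := by exact_mod_cast h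
    rw [if_pos h]
    congr 1
    · ring
    · rw [h']; ring
  · rw [if_neg (by omega)]
    congr 1 <;> ring

lemma sub2 (K : ℕ) (s : ℤ) :
    (Gmat (K + 2) s).submatrix (Fin.succAbove 1) Fin.succ = Gmat (K + 1) (s + 1) := by
  ext i j
  simp only [Matrix.submatrix_apply, Gmat, Matrix.of_apply, Fin.val_succ]
  rcases Nat.eq_zero_or_pos (i : ℕ) with h | h
  · have hi : i = 0 := by ext; simpa using h
    subst hi
    have : Fin.succAbove (1 : Fin (K + 2)) 0 = 0 := rfl
    rw [this]
    simp only [Fin.val_zero, if_pos rfl]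
    push_cast
    ring_nf
  · have : Fin.succAbove (1 : Fin (K + 2)) i = i.succ := by
      rw [Fin.succAbove]
      rw [if_neg]
      simp only [Fin.lt_def, Fin.coe_castSucc, Fin.val_one, not_lt]
      omega
    rw [this, Fin.val_succ]
    rw [if_neg (by omega), if_neg (by omega)]
    push_cast
    ring_nf

lemma Plem (K : ℕ) (s : ℤ) :
    Fdet (K + 2) s = ichoose (2 * (K : ℤ) + 3) s * Fdet (K + 1) 1 - Fdet (K + 1) (s + 1) := by
  rw [Fdet, Matrix.det_succ_column_zero, Fin.sum_univ_succ, Fin.sum_univ_succ]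
  have hzero : ∀ i : Fin K,
      Gmat (K + 2) s (Fin.succ (Fin.succ i)) 0 = 0 := by
    intro i
    simp only [Gmat, Matrix.of_apply, Fin.val_succ]
    rw [if_neg (by omega)]
    apply ichoose_neg
    have : (((0 : Fin (K+2)) : ℤ)) = 0 := rfl
    push_cast
    omega
  have hsum : (∑ i : Fin K,
      (-1) ^ ((Fin.succ (Fin.succ i) : Fin (K + 2)) : ℕ) * Gmat (K + 2) s (Fin.succ (Fin.succ i)) 0 *
        ((Gmat (K + 2) s).submatrix (Fin.succAbove (Fin.succ (Fin.succ i))) Fin.succ).det) = 0 := by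
    apply Finset.sum_eq_zero
    intro i _
    rw [hzero i]; ring
  rw [hsum, Fin.succ_zero_eq_one, sub1, sub2]
  have h00 : Gmat (K + 2) s 0 0 = ichoose (2 * (K : ℤ) + 3) s := by
    simp only [Gmat, Matrix.of_apply]
    norm_num
    congr 1
    push_cast
    ring
  have h10 : Gmat (K + 2) s 1 0 = 1 := by
    simp only [Gmat, Matrix.of_apply]
    rw [if_neg (by norm_num)]
    norm_num [ichoose_zero]
  rw [h00, h10]
  simp [Fdet]
  ring

lemma ichoose_1_big {s : ℤ} (h : 2 ≤ s) : ichoose 1 s = 0 :=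
  ichoose_eq_zero_of_lt (by norm_num) (by omega)

lemma Rlem (M : ℕ) : ∀ s : ℤ, 1 ≤ s →
    3 * ((M : ℤ) + s + 1) * ((M : ℤ) + s) * Fdet (M + 1) s
      + 3 * s * (s + 4 * (M : ℤ) + 5) * Fdet (M + 1) (s + 1)
    = (2 * (M : ℤ) + 3 - s) * (2 * (M : ℤ) + 2 - s) * Fdet (M + 2) s := by
  induction M with
  | zero =>
    intro s hs
    have hP := Plem 0 s
    have h11 : Fdet 1 1 = 1 := by rw [Fdet_one, ichoose_one] <;> norm_num
    rw [hP, h11, Fdet_one, Fdet_one]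
    push_cast
    rcases (by omega : s = 1 ∨ s = 2 ∨ s = 3 ∨ 4 ≤ s) with h | h | h | h
    · subst h
      rw [ichoose_one (by norm_num), ichoose_1_big (by norm_num),
        show ichoose 3 1 = 3 from ichoose_one (by norm_num)]
      ring
    · subst h
      rw [ichoose_1_big (by norm_num), ichoose_1_big (by norm_num)]
      ring
    · subst h
      rw [ichoose_1_big (by norm_num), ichoose_1_big (by norm_num)]
      ring
    · rw [ichoose_1_big (by omega), ichoose_1_big (by omega),
        ichoose_eq_zero_of_lt (show (0:ℤ) ≤ 3 by norm_num) (by omega)]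
      ring
  | succ M IH =>
    intro s hs
    have P1 := Plem (M + 1) s
    have P2 := Plem M s
    have P3 := Plem M (s + 1)
    have P4 := Plem M 1
    have IH1 := IH (s + 1) (by omega)
    have IH2 := IH 1 (by norm_num)
    have hW : ichoose (2 * (M : ℤ) + 3) 1 = 2 * (M : ℤ) + 3 := ichoose_one (by positivity)
    rw [hW] at P4
    -- ratio: 2(M+2)(2M+5) Fdet (M+2) 1 = 3(3M+5)(3M+4) Fdet (M+1) 1
    have hR : 2 * ((M : ℤ) + 2) * (2 * (M : ℤ) + 5) * Fdet (M + 2) 1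
        = 3 * (3 * (M : ℤ) + 5) * (3 * (M : ℤ) + 4) * Fdet (M + 1) 1 := by
      linear_combination (-1 : ℤ) * IH2 + 3 * (4 * (M : ℤ) + 6) * P4
    have L1a1 := ichoose_absorb (a := 2 * (M : ℤ) + 5) (s := s) (by omega) (by omega)
    have L1a2 := ichoose_absorb (a := 2 * (M : ℤ) + 4) (s := s) (by omega) (by omega)
    have L2 := ichoose_succ (a := 2 * (M : ℤ) + 3) (s := s) (by omega) (by omega)
    rw [show (2 * (M : ℤ) + 5 - 1) = 2 * (M : ℤ) + 4 by ring] at L1a1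
    rw [show (2 * (M : ℤ) + 4 - 1) = 2 * (M : ℤ) + 3 by ring] at L1a2
    simp only [show M + 1 + 1 = M + 2 from by omega, show M + 1 + 2 = M + 3 from by omega,
      show M + 2 + 1 = M + 3 from by omega] at P1 ⊢
    push_cast at P1 P2 P3 P4 IH1 IH2 hR ⊢
    rw [show 2 * ((M : ℤ) + 1) + 3 = 2 * (M : ℤ) + 5 by ring] at P1
    linear_combination (-(2 * (M : ℤ) + 5 - s) * (2 * (M : ℤ) + 4 - s)) * P1
      + 3 * ((M : ℤ) + s + 2) * ((M : ℤ) + s + 1) * P2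
      + 3 * (s + 1) * (s + 4 * (M : ℤ) + 6) * P3
      + (-1 : ℤ) * IH1
      + (-(Fdet (M + 2) 1) * (2 * (M : ℤ) + 4 - s)) * L1a1
      + (-(Fdet (M + 2) 1) * (2 * (M : ℤ) + 5)) * L1a2
      + (3 * (s + 4 * (M : ℤ) + 6) * Fdet (M + 1) 1) * L2
      + (-(ichoose (2 * (M : ℤ) + 3) s)) * hR

lemma ratio (M : ℕ) : 2 * ((M : ℤ) + 2) * (2 * (M : ℤ) + 5) * Fdet (M + 2) 1
    = 3 * (3 * (M : ℤ) + 5) * (3 * (M : ℤ) + 4) * Fdet (M + 1) 1 := by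
  have P4 := Plem M 1
  rw [ichoose_one (by positivity)] at P4
  have IH2 := Rlem M 1 (by norm_num)
  linear_combination (-1 : ℤ) * IH2 + 3 * (4 * (M : ℤ) + 6) * P4

lemma L3 (M : ℕ) : 2 * (M + 2) * (2 * M + 3) * ((3 * M + 6).choose (M + 2))
    = 3 * (3 * M + 5) * (3 * M + 4) * ((3 * M + 3).choose (M + 1)) := by
  have h1 : (M + 2) ≤ 3 * M + 6 := by omega
  have h2 : (M + 1) ≤ 3 * M + 3 := by omega
  have c1 := Nat.cast_choose ℚ h1
  have c2 := Nat.cast_choose ℚ h2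
  rw [show 3 * M + 6 - (M + 2) = 2 * M + 4 by omega] at c1
  rw [show 3 * M + 3 - (M + 1) = 2 * M + 2 by omega] at c2
  have e1 : (Nat.factorial (3 * M + 6) : ℚ)
      = ((3 * M + 6) * (3 * M + 5) * (3 * M + 4)) * (Nat.factorial (3 * M + 3) : ℚ) := by
    rw [show 3 * M + 6 = 3 * M + 3 + 1 + 1 + 1 by omega]
    rw [Nat.factorial_succ, Nat.factorial_succ, Nat.factorial_succ]
    push_cast; ring
  have e2 : (Nat.factorial (M + 2) : ℚ) = (M + 2) * (Nat.factorial (M + 1) : ℚ) := by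
    rw [show M + 2 = M + 1 + 1 by omega, Nat.factorial_succ]; push_cast; ring
  have e3 : (Nat.factorial (2 * M + 4) : ℚ) = ((2 * M + 4) * (2 * M + 3)) * (Nat.factorial (2 * M + 2) : ℚ) := by
    rw [show 2 * M + 4 = 2 * M + 2 + 1 + 1 by omega, Nat.factorial_succ, Nat.factorial_succ]
    push_cast; ring
  have key : (2 * (M + 2) * (2 * M + 3) * ((3 * M + 6).choose (M + 2)) : ℚ)
      = (3 * (3 * M + 5) * (3 * M + 4) * ((3 * M + 3).choose (M + 1)) : ℚ) := by
    push_cast [c1, c2, e1, e2, e3]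
    have f1 : (Nat.factorial (M + 1) : ℚ) ≠ 0 := by positivity
    have f2 : (Nat.factorial (2 * M + 2) : ℚ) ≠ 0 := by positivity
    have f3 : (Nat.factorial (3 * M + 3) : ℚ) ≠ 0 := by positivity
    field_simp
    ring
  exact_mod_cast key

lemma Alem (M : ℕ) : (2 * (M : ℤ) + 3) * Fdet (M + 1) 1 = ichoose (3 * (M : ℤ) + 3) ((M : ℤ) + 1) := by
  induction M with
  | zero =>
    have h11 : Fdet 1 1 = 1 := by rw [Fdet_one]; exact ichoose_one (by norm_num)
    norm_num [h11]
    rw [ichoose_one (by norm_num)]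
  | succ M IH =>
    have hr := ratio M
    have l3 := L3 M
    have hc1 : ichoose (3 * ((M : ℤ) + 1) + 3) ((M : ℤ) + 2)
        = ((3 * M + 6).choose (M + 2) : ℤ) := by
      rw [show 3 * ((M : ℤ) + 1) + 3 = ((3 * M + 6 : ℕ) : ℤ) by push_cast; ring,
        show (M : ℤ) + 2 = ((M + 2 : ℕ) : ℤ) by push_cast; ring, ichoose_natCast]
    have hc2 : ichoose (3 * (M : ℤ) + 3) ((M : ℤ) + 1) = ((3 * M + 3).choose (M + 1) : ℤ) := by
      rw [show 3 * (M : ℤ) + 3 = ((3 * M + 3 : ℕ) : ℤ) by push_cast; ring,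
        show (M : ℤ) + 1 = ((M + 1 : ℕ) : ℤ) by push_cast; ring, ichoose_natCast]
    rw [hc2] at IH
    push_cast
    rw [show (M : ℤ) + 1 + 1 = (M : ℤ) + 2 by ring, hc1]
    rw [show M + 1 + 1 = M + 2 from by omega]
    have hl3 : (2 * ((M : ℤ) + 2) * (2 * (M : ℤ) + 3)) * ((3 * M + 6).choose (M + 2) : ℤ)
        = (3 * (3 * (M : ℤ) + 5) * (3 * (M : ℤ) + 4)) * ((3 * M + 3).choose (M + 1) : ℤ) := by
      exact_mod_cast l3
    have hcancel : (2 * ((M : ℤ) + 2) * (2 * (M : ℤ) + 3)) ≠ 0 := by positivity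
    apply mul_left_cancel₀ hcancel
    linear_combination (2 * (M : ℤ) + 3) * hr - hl3
      + (3 * (3 * (M : ℤ) + 5) * (3 * (M : ℤ) + 4)) * IH

lemma D_eq_Fdet (N : ℕ) : D (2 * (N : ℤ) + 1) ((N : ℤ) + 1) 0 3 = Fdet N 1 := by
  unfold D Fdet
  have h : ((N : ℤ) + 1 - 1).toNat = N := by omega
  rw [show ((Matrix.of fun i j : Fin (((N : ℤ) + 1) - 1).toNat =>
      ichoose ((2 * (N : ℤ) + 1) - max 0 ((3 - 1) * ((j : ℤ) + 1)))
        (1 - ((i : ℤ) + 1) + ((j : ℤ) + 1)))) =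
    Matrix.reindex (finCongr h).symm (finCongr h).symm (Gmat N 1) from ?_]
  · rw [Matrix.det_reindex_self]
  · ext i j
    simp only [Matrix.of_apply, Matrix.reindex_apply, Matrix.submatrix_apply, Gmat,
      finCongr_symm, finCongr_apply, Fin.coe_cast]
    have hmax : max (0 : ℤ) ((3 - 1) * ((j : ℤ) + 1)) = 2 * ((j : ℤ) + 1) := by
      rw [max_eq_right] <;> [ring; positivity]
    rw [hmax]
    rcases Nat.eq_zero_or_pos (i : ℕ) with h0 | h0
    · rw [if_pos h0]
      have h0' : ((i : ℕ) : ℤ) = 0 := by exact_mod_cast h0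
      congr 1
      · ring
      · rw [h0']; ring
    · rw [if_neg (by omega)]
      congr 1
      · ring
      · ring

theorem det_eq_ternary (n : ℤ) (hn : 1 ≤ n) :
    (D (2 * n + 1) (n + 1) 0 3 : ℚ) = 1 / (2 * (n : ℚ) + 1) * (ichoose (3 * n) n : ℚ) := by
  lift n to ℕ using (by omega)
  obtain ⟨N, rfl⟩ : ∃ N : ℕ, n = N + 1 := ⟨n - 1, by omega⟩
  push_cast
  rw [show 2 * ((N : ℤ) + 1) + 1 = 2 * ((N + 1 : ℕ) : ℤ) + 1 by push_cast; ring,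
    show (N : ℤ) + 1 + 1 = ((N + 1 : ℕ) : ℤ) + 1 by push_cast; ring, D_eq_Fdet (N + 1)]
  have hA := Alem N
  have hA' : ((2 * (N : ℤ) + 3) * Fdet (N + 1) 1 : ℤ) = (ichoose (3 * (N : ℤ) + 3) ((N : ℤ) + 1) : ℤ) := hA
  have hcast : ((2 * (N : ℚ) + 3) * (Fdet (N + 1) 1 : ℚ)) = (ichoose (3 * (N : ℤ) + 3) ((N : ℤ) + 1) : ℚ) := by
    exact_mod_cast congrArg (fun z : ℤ => (z : ℚ)) hA'
  rw [show 3 * ((N : ℤ) + 1) = 3 * (N : ℤ) + 3 by ring, show ((N : ℤ) + 1) = (N : ℤ) + 1 from rfl]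
  have hne : (2 * (N : ℚ) + 2 + 1) ≠ 0 := by positivity
  field_simp
  linear_combination hcast
end
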